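/- If T = Σ_{i=1}^r λ_i a_i ∘ b_i ∘ c_i is ODECO with all λ_i > 0, then the spectral norm of T equals max_i λ_i. -/
import Mathlib


open scoped BigOperators

lemma bessel_coord {d r : ℕ} (a : Fin r → Fin d → ℝ) (u : Fin d → ℝ)
    (ha : ∀ i j, (∑ p, a i p * a j p) = if i = j then (1 : ℝ) else 0)
    (hu : ∑ p, u p ^ 2 = 1) :
    (∑ i, (∑ p, a i p * u p) ^ 2) ≤ 1 := by
  set α : Fin r → ℝ := fun i => ∑ p, a i p * u p with hα
  have key : 0 ≤ ∑ p, (u p - ∑ i, α i * a i p) ^ 2 :=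
    Finset.sum_nonneg fun p _ => sq_nonneg _
  have hA : ∑ p, u p * ∑ i, α i * a i p = ∑ i, α i ^ 2 := by
    simp only [Finset.mul_sum]
    rw [Finset.sum_comm]
    refine Finset.sum_congr rfl fun i _ => ?_
    calc ∑ p, u p * (α i * a i p) = α i * ∑ p, a i p * u p := by
          rw [Finset.mul_sum]; exact Finset.sum_congr rfl fun p _ => by ring
      _ = α i ^ 2 := by rw [sq]
  have hB : ∑ p, (∑ i, α i * a i p) ^ 2 = ∑ i, α i ^ 2 := by
    have h1 : ∀ p, (∑ i, α i * a i p) ^ 2 = ∑ i, ∑ j, α i * α j * (a i p * a j p) := by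
      intro p
      rw [sq, Finset.sum_mul_sum]
      exact Finset.sum_congr rfl fun i _ => Finset.sum_congr rfl fun j _ => by ring
    simp only [h1]
    rw [Finset.sum_comm]
    refine Finset.sum_congr rfl fun i _ => ?_
    rw [Finset.sum_comm]
    have h2 : ∀ j, ∑ p, α i * α j * (a i p * a j p) = α i * α j * (if i = j then (1:ℝ) else 0) := by
      intro j; rw [← Finset.mul_sum, ha i j]
    simp only [h2, mul_ite, mul_one, mul_zero]
    simp [Finset.sum_ite_eq', sq]
  have expand : ∑ p, (u p - ∑ i, α i * a i p) ^ 2 = 1 - ∑ i, α i ^ 2 := by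
    have h3 : ∀ p, (u p - ∑ i, α i * a i p) ^ 2
        = u p ^ 2 - 2 * (u p * ∑ i, α i * a i p) + (∑ i, α i * a i p) ^ 2 := fun p => by ring
    simp only [h3]
    rw [Finset.sum_add_distrib, Finset.sum_sub_distrib, ← Finset.mul_sum, hA, hB, hu]
    ring
  rw [expand] at key
  linarith

lemma rev3 {d : ℕ} (g : Fin d → Fin d → Fin d → ℝ) :
    ∑ p, ∑ q, ∑ s, g p q s = ∑ s, ∑ q, ∑ p, g p q s :=
  calc ∑ p, ∑ q, ∑ s, g p q s = ∑ p, ∑ s, ∑ q, g p q s :=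
        Finset.sum_congr rfl fun p _ => Finset.sum_comm
    _ = ∑ s, ∑ p, ∑ q, g p q s := Finset.sum_comm
    _ = ∑ s, ∑ q, ∑ p, g p q s := Finset.sum_congr rfl fun s _ => Finset.sum_comm

lemma value_eq {d r : ℕ} (lam : Fin r → ℝ) (a b c : Fin r → Fin d → ℝ)
    (u v w : Fin d → ℝ) :
    (∑ p, ∑ q, ∑ s, (∑ i, lam i * (a i p * b i q * c i s)) * (u p * v q * w s))
    = ∑ i, lam i * (∑ p, a i p * u p) * (∑ q, b i q * v q) * (∑ s, c i s * w s) := by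
  have h : ∀ i, lam i * (∑ p, a i p * u p) * (∑ q, b i q * v q) * (∑ s, c i s * w s)
      = ∑ s, ∑ q, ∑ p, lam i * (a i p * b i q * c i s) * (u p * v q * w s) := by
    intro i
    simp only [Finset.mul_sum, Finset.sum_mul]
    refine Finset.sum_congr rfl fun s _ => Finset.sum_congr rfl fun q _ =>
      Finset.sum_congr rfl fun p _ => by ring
  calc ∑ p, ∑ q, ∑ s, (∑ i, lam i * (a i p * b i q * c i s)) * (u p * v q * w s)
      = ∑ p, ∑ q, ∑ s, ∑ i, lam i * (a i p * b i q * c i s) * (u p * v q * w s) := by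
        simp only [Finset.sum_mul]
    _ = ∑ p, ∑ q, ∑ i, ∑ s, lam i * (a i p * b i q * c i s) * (u p * v q * w s) :=
        Finset.sum_congr rfl fun p _ => Finset.sum_congr rfl fun q _ => Finset.sum_comm
    _ = ∑ p, ∑ i, ∑ q, ∑ s, lam i * (a i p * b i q * c i s) * (u p * v q * w s) :=
        Finset.sum_congr rfl fun p _ => Finset.sum_comm
    _ = ∑ i, ∑ p, ∑ q, ∑ s, lam i * (a i p * b i q * c i s) * (u p * v q * w s) :=
        Finset.sum_comm
    _ = ∑ i, ∑ s, ∑ q, ∑ p, lam i * (a i p * b i q * c i s) * (u p * v q * w s) :=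
        Finset.sum_congr rfl fun i _ => rev3 _
    _ = ∑ i, lam i * (∑ p, a i p * u p) * (∑ q, b i q * v q) * (∑ s, c i s * w s) :=
        Finset.sum_congr rfl fun i _ => (h i).symm

/-- For an ODECO tensor `T = ∑ᵢ λᵢ aᵢ ∘ bᵢ ∘ cᵢ` with all `λᵢ > 0`,
the spectral norm of `T` equals `maxᵢ λᵢ`. -/
theorem odeco_spectral_norm_eq_max
    (d r : ℕ) (hr : 0 < r) (lam : Fin r → ℝ) (a b c : Fin r → Fin d → ℝ)
    (hlam : ∀ i, 0 < lam i)
    (ha : ∀ i j, (∑ p, a i p * a j p) = if i = j then (1 : ℝ) else 0)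
    (hb : ∀ i j, (∑ p, b i p * b j p) = if i = j then (1 : ℝ) else 0)
    (hc : ∀ i j, (∑ p, c i p * c j p) = if i = j then (1 : ℝ) else 0) :
    sSup {x : ℝ | ∃ u v w : Fin d → ℝ, (∑ p, u p ^ 2 = 1) ∧ (∑ p, v p ^ 2 = 1) ∧
        (∑ p, w p ^ 2 = 1) ∧
        x = ∑ p, ∑ q, ∑ s, (∑ i, lam i * (a i p * b i q * c i s)) * (u p * v q * w s)}
      = Finset.univ.sup' ⟨⟨0, hr⟩, Finset.mem_univ _⟩ lam := by
  set M := Finset.univ.sup' ⟨⟨0, hr⟩, Finset.mem_univ _⟩ lam with hM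
  obtain ⟨i0, -, hi0⟩ := Finset.exists_mem_eq_sup' (⟨⟨0, hr⟩, Finset.mem_univ _⟩ :
    (Finset.univ : Finset (Fin r)).Nonempty) lam
  have hMpos : 0 < M := hM ▸ hi0 ▸ hlam i0
  -- membership
  have hmem : M ∈ {x : ℝ | ∃ u v w : Fin d → ℝ, (∑ p, u p ^ 2 = 1) ∧ (∑ p, v p ^ 2 = 1) ∧
        (∑ p, w p ^ 2 = 1) ∧
        x = ∑ p, ∑ q, ∑ s, (∑ i, lam i * (a i p * b i q * c i s)) * (u p * v q * w s)} := by
    refine ⟨a i0, b i0, c i0, ?_, ?_, ?_, ?_⟩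
    · have := ha i0 i0; simpa [sq] using this
    · have := hb i0 i0; simpa [sq] using this
    · have := hc i0 i0; simpa [sq] using this
    · rw [value_eq]
      simp only [ha, hb, hc]
      rw [hM, hi0]
      rw [Finset.sum_eq_single i0]
      · simp
      · intro j _ hj; simp [hj]
      · intro h; exact absurd (Finset.mem_univ i0) h
  -- upper bound
  have hub : ∀ x ∈ {x : ℝ | ∃ u v w : Fin d → ℝ, (∑ p, u p ^ 2 = 1) ∧ (∑ p, v p ^ 2 = 1) ∧
        (∑ p, w p ^ 2 = 1) ∧
        x = ∑ p, ∑ q, ∑ s, (∑ i, lam i * (a i p * b i q * c i s)) * (u p * v q * w s)},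
      x ≤ M := by
    rintro x ⟨u, v, w, hu, hv, hw, rfl⟩
    rw [value_eq]
    set α : Fin r → ℝ := fun i => ∑ p, a i p * u p with hαdef
    set β : Fin r → ℝ := fun i => ∑ p, b i p * v p with hβdef
    set γ : Fin r → ℝ := fun i => ∑ p, c i p * w p with hγdef
    have hα : ∑ i, α i ^ 2 ≤ 1 := bessel_coord a u ha hu
    have hβ : ∑ i, β i ^ 2 ≤ 1 := bessel_coord b v hb hv
    have hγ : ∑ i, γ i ^ 2 ≤ 1 := bessel_coord c w hc hw
    have hγ1 : ∀ i, |γ i| ≤ 1 := by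
      intro i
      have h1 : γ i ^ 2 ≤ 1 :=
        le_trans (Finset.single_le_sum (f := fun j => γ j ^ 2)
          (fun j _ => sq_nonneg _) (Finset.mem_univ i)) hγ
      exact abs_le.mpr ⟨by nlinarith, by nlinarith⟩
    have hCS : ∑ i, |α i| * |β i| ≤ 1 := by
      have h2 : (∑ i, |α i| * |β i|) ^ 2 ≤ (∑ i, |α i| ^ 2) * ∑ i, |β i| ^ 2 :=
        Finset.sum_mul_sq_le_sq_mul_sq _ _ _
      simp only [sq_abs] at h2
      have h3 : 0 ≤ ∑ i, |α i| * |β i| :=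
        Finset.sum_nonneg fun i _ => mul_nonneg (abs_nonneg _) (abs_nonneg _)
      have h4 : (0:ℝ) ≤ ∑ i, α i ^ 2 := Finset.sum_nonneg fun i _ => sq_nonneg _
      have h5 : (0:ℝ) ≤ ∑ i, β i ^ 2 := Finset.sum_nonneg fun i _ => sq_nonneg _
      nlinarith
    calc ∑ i, lam i * α i * β i * γ i ≤ ∑ i, M * (|α i| * |β i|) := by
          refine Finset.sum_le_sum fun i _ => ?_
          have habg : α i * β i * γ i ≤ |α i| * |β i| := by
            calc α i * β i * γ i ≤ |α i * β i * γ i| := le_abs_self _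
              _ = |α i| * |β i| * |γ i| := by rw [abs_mul, abs_mul]
              _ ≤ |α i| * |β i| * 1 := by
                  exact mul_le_mul_of_nonneg_left (hγ1 i)
                    (mul_nonneg (abs_nonneg _) (abs_nonneg _))
              _ = |α i| * |β i| := mul_one _
          have hlamM : lam i ≤ M := hM ▸ Finset.le_sup' lam (Finset.mem_univ i)
          have h4 : lam i * (α i * β i * γ i) ≤ lam i * (|α i| * |β i|) :=
            mul_le_mul_of_nonneg_left habg (hlam i).le
          have h5 : lam i * (|α i| * |β i|) ≤ M * (|α i| * |β i|) :=
            mul_le_mul_of_nonneg_right hlamM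
              (mul_nonneg (abs_nonneg _) (abs_nonneg _))
          calc lam i * α i * β i * γ i = lam i * (α i * β i * γ i) := by ring
            _ ≤ lam i * (|α i| * |β i|) := h4
            _ ≤ M * (|α i| * |β i|) := h5
      _ = M * ∑ i, |α i| * |β i| := (Finset.mul_sum _ _ _).symm
      _ ≤ M * 1 := mul_le_mul_of_nonneg_left hCS hMpos.le
      _ = M := mul_one M
  exact le_antisymm (csSup_le ⟨M, hmem⟩ hub) (le_csSup ⟨M, hub⟩ hmem)
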